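/- Let R be a finite nonzero commutative ring with identity, |R| = r, let n ≥ 2, and let f_i : R^{2i-2} → R for 2 ≤ i ≤ n be arbitrary functions. Then the complete bipartite graph K_{r^n,r^n} admits an edge-decomposition by BΓ(R; f_2,…,f_n): there is a collection of subgraphs of K_{r^n,r^n}, each isomorphic to BΓ(R; f_2,…,f_n), whose edge sets partition the edge set of K_{r^n,r^n}. -/
import Mathlib

/-- The adjacency condition of the graph `BΓ(R; f₂, …, f_n)`. -/
def bAdj {R : Type} [CommRing R] (n : ℕ)
    (f : (i : ℕ) → (Fin i → R) → (Fin i → R) → R)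
    (p l : Fin n → R) : Prop :=
  ∀ i : Fin n, 1 ≤ (i : ℕ) →
    p i + l i = f i (fun j => p (Fin.castLE i.isLt.le j))
                    (fun j => l (Fin.castLE i.isLt.le j))

/-- The bipartite graph `BΓ(R; f₂, …, f_n)`. -/
def BGamma (R : Type) [CommRing R] (n : ℕ)
    (f : (i : ℕ) → (Fin i → R) → (Fin i → R) → R) :
    SimpleGraph ((Fin n → R) ⊕ (Fin n → R)) :=
  SimpleGraph.fromRel (fun x y => ∃ p l, x = Sum.inl p ∧ y = Sum.inr l ∧ bAdj n f p l)

namespace S5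
variable {R : Type} [CommRing R]

def sol (f : (i : ℕ) → (Fin i → R) → (Fin i → R) → R) (p m : ℕ → R) : ℕ → R
  | 0 => 0
  | (i+1) => p (i+1) + m (i+1) -
      f (i+1) (fun j => p j) (fun j : Fin (i+1) => m j - sol f p m j)
termination_by i => i
decreasing_by exact j.isLt

lemma sol_zero (f : (i : ℕ) → (Fin i → R) → (Fin i → R) → R) (p m : ℕ → R) :
    sol f p m 0 = 0 := by rw [sol]

lemma sol_spec (f : (i : ℕ) → (Fin i → R) → (Fin i → R) → R) (p m : ℕ → R) (i : ℕ)
    (hi : i ≠ 0) :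
    sol f p m i = p i + m i - f i (fun j => p j) (fun j : Fin i => m j - sol f p m j) := by
  obtain ⟨k, rfl⟩ := Nat.exists_eq_succ_of_ne_zero hi
  rw [sol]

def ext0 {n : ℕ} (p : Fin n → R) : ℕ → R := fun k => if h : k < n then p ⟨k, h⟩ else 0

lemma ext0_val {n : ℕ} (p : Fin n → R) (j : Fin n) : ext0 p ↑j = p j := by
  simp only [ext0, dif_pos j.isLt, Fin.eta]

def aSol {n : ℕ} (f : (i : ℕ) → (Fin i → R) → (Fin i → R) → R) (p m : Fin n → R) :
    Fin n → R := fun i => sol f (ext0 p) (ext0 m) ↑i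

lemma aSol_zero {n : ℕ} (hn : 0 < n) (f : (i : ℕ) → (Fin i → R) → (Fin i → R) → R)
    (p m : Fin n → R) : aSol f p m ⟨0, hn⟩ = 0 := sol_zero f _ _

lemma aSol_adj {n : ℕ} (f : (i : ℕ) → (Fin i → R) → (Fin i → R) → R)
    (p m : Fin n → R) : bAdj n f p (m - aSol f p m) := by
  intro i hi
  have key := sol_spec f (ext0 p) (ext0 m) ↑i (by omega)
  have h1 : (fun j : Fin (i : ℕ) => ext0 p ↑j) =
      (fun j => p (Fin.castLE i.isLt.le j)) := by
    funext j
    simp only [ext0, dif_pos (j.isLt.trans i.isLt)]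
    rfl
  have h2 : (fun j : Fin (i : ℕ) => ext0 m ↑j - sol f (ext0 p) (ext0 m) ↑j) =
      (fun j => m (Fin.castLE i.isLt.le j) - aSol f p m (Fin.castLE i.isLt.le j)) := by
    funext j
    simp only [ext0, dif_pos (j.isLt.trans i.isLt)]
    rfl
  rw [h1, h2, ext0_val, ext0_val] at key
  have ha : aSol f p m i = p i + m i -
      f ↑i (fun j => p (Fin.castLE i.isLt.le j))
        (fun j => m (Fin.castLE i.isLt.le j) - aSol f p m (Fin.castLE i.isLt.le j)) := key
  simp only [Pi.sub_apply]
  rw [ha]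
  ring

lemma aSol_unique {n : ℕ} (hn : 0 < n) (f : (i : ℕ) → (Fin i → R) → (Fin i → R) → R)
    (p m : Fin n → R) (b : Fin n → R) (hb0 : b ⟨0, hn⟩ = 0)
    (hb : bAdj n f p (m - b)) : b = aSol f p m := by
  suffices H : ∀ k, ∀ hk : k < n, b ⟨k, hk⟩ = aSol f p m ⟨k, hk⟩ by
    funext i; have := H i i.isLt; simpa using this
  intro k
  induction k using Nat.strong_induction_on with
  | _ k ih =>
    intro hk
    rcases Nat.eq_zero_or_pos k with rfl | hk1
    · exact hb0.trans (aSol_zero hn f p m).symm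
    · have e1 := hb ⟨k, hk⟩ hk1
      have e2 := aSol_adj f p m ⟨k, hk⟩ hk1
      have harg : (fun j : Fin ((⟨k, hk⟩ : Fin n) : ℕ) =>
            (m - b) (Fin.castLE (Fin.isLt _).le j)) =
          (fun j => (m - aSol f p m) (Fin.castLE (Fin.isLt _).le j)) := by
        funext j
        simp only [Pi.sub_apply]
        have hj : b (Fin.castLE (Fin.isLt (⟨k, hk⟩ : Fin n)).le j) =
            aSol f p m (Fin.castLE (Fin.isLt (⟨k, hk⟩ : Fin n)).le j) :=
          ih ↑j j.isLt (lt_trans j.isLt hk)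
        rw [hj]
      rw [harg] at e1
      simp only [Pi.sub_apply] at e1 e2
      linear_combination e2 - e1

theorem core {n : ℕ} (hn : 0 < n) (f : (i : ℕ) → (Fin i → R) → (Fin i → R) → R)
    (p m : Fin n → R) :
    ∃! a : Fin n → R, a ⟨0, hn⟩ = 0 ∧ bAdj n f p (m - a) :=
  ⟨aSol f p m, ⟨aSol_zero hn f p m, aSol_adj f p m⟩,
    fun b ⟨h1, h2⟩ => aSol_unique hn f p m b h1 h2⟩

lemma map_equiv_adj {α β : Type} (G : SimpleGraph α) (e : α ≃ β) (u v : β) :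
    (G.map e.toEmbedding).Adj u v ↔ G.Adj (e.symm u) (e.symm v) := by
  rw [SimpleGraph.map_adj]
  constructor
  · rintro ⟨x, y, h, rfl, rfl⟩; simpa using h
  · intro h; exact ⟨_, _, h, e.apply_symm_apply u, e.apply_symm_apply v⟩

lemma BGamma_adj_inl_inr {n : ℕ} (f : (i : ℕ) → (Fin i → R) → (Fin i → R) → R)
    (p l : Fin n → R) :
    (BGamma R n f).Adj (Sum.inl p) (Sum.inr l) ↔ bAdj n f p l := by
  simp [BGamma, SimpleGraph.fromRel_adj]

lemma BGamma_adj_inl_inl {n : ℕ} (f : (i : ℕ) → (Fin i → R) → (Fin i → R) → R)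
    (p q : Fin n → R) : ¬ (BGamma R n f).Adj (Sum.inl p) (Sum.inl q) := by
  simp [BGamma, SimpleGraph.fromRel_adj]

lemma BGamma_adj_inr_inr {n : ℕ} (f : (i : ℕ) → (Fin i → R) → (Fin i → R) → R)
    (p q : Fin n → R) : ¬ (BGamma R n f).Adj (Sum.inr p) (Sum.inr q) := by
  simp [BGamma, SimpleGraph.fromRel_adj]

def shiftE {n : ℕ} (a : Fin n → R) :
    ((Fin n → R) ⊕ (Fin n → R)) ≃ ((Fin n → R) ⊕ (Fin n → R)) :=
  Equiv.sumCongr (Equiv.refl _) (Equiv.addRight a)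

def Gp (n : ℕ) (f : (i : ℕ) → (Fin i → R) → (Fin i → R) → R) (a : Fin n → R) :
    SimpleGraph ((Fin n → R) ⊕ (Fin n → R)) :=
  (BGamma R n f).map (shiftE a).toEmbedding

lemma Gp_adj_inl_inr {n : ℕ} (f : (i : ℕ) → (Fin i → R) → (Fin i → R) → R)
    (a : Fin n → R) (p m : Fin n → R) :
    (Gp n f a).Adj (Sum.inl p) (Sum.inr m) ↔ bAdj n f p (m - a) := by
  rw [Gp, map_equiv_adj]
  have h1 : (shiftE a).symm (Sum.inl p) = Sum.inl p := rfl
  have h2 : (shiftE a).symm (Sum.inr m) = Sum.inr (m - a) := by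
    simp [shiftE, Equiv.addRight, sub_eq_add_neg]
  rw [h1, h2, BGamma_adj_inl_inr]

lemma Gp_adj_inl_inl {n : ℕ} (f : (i : ℕ) → (Fin i → R) → (Fin i → R) → R)
    (a : Fin n → R) (p q : Fin n → R) :
    ¬ (Gp n f a).Adj (Sum.inl p) (Sum.inl q) := by
  rw [Gp, map_equiv_adj]
  exact BGamma_adj_inl_inl f _ _

lemma Gp_adj_inr_inr {n : ℕ} (f : (i : ℕ) → (Fin i → R) → (Fin i → R) → R)
    (a : Fin n → R) (p q : Fin n → R) :
    ¬ (Gp n f a).Adj (Sum.inr p) (Sum.inr q) := by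
  rw [Gp, map_equiv_adj]
  exact BGamma_adj_inr_inr f _ _

lemma keyV {n : ℕ} (hn : 0 < n) (f : (i : ℕ) → (Fin i → R) → (Fin i → R) → R)
    (x y : (Fin n → R) ⊕ (Fin n → R)) :
    (completeBipartiteGraph (Fin n → R) (Fin n → R)).Adj x y ↔
      ∃! a : {a : Fin n → R // a ⟨0, hn⟩ = 0}, (Gp n f a.1).Adj x y := by
  cases x with
  | inl p =>
    cases y with
    | inl q => simp [ExistsUnique, Gp_adj_inl_inl]
    | inr m =>
      refine iff_of_true (by simp) ?_
      obtain ⟨a, ⟨ha0, hadj⟩, hu⟩ := core hn f p m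
      exact ⟨⟨a, ha0⟩, (Gp_adj_inl_inr f a p m).2 hadj,
        fun b hb => Subtype.ext (hu b.1 ⟨b.2, (Gp_adj_inl_inr f b.1 p m).1 hb⟩)⟩
  | inr m =>
    cases y with
    | inl p =>
      refine iff_of_true (by simp) ?_
      obtain ⟨a, ⟨ha0, hadj⟩, hu⟩ := core hn f p m
      exact ⟨⟨a, ha0⟩, ((Gp_adj_inl_inr f a p m).2 hadj).symm,
        fun b hb => Subtype.ext (hu b.1 ⟨b.2, (Gp_adj_inl_inr f b.1 p m).1 hb.symm⟩)⟩
    | inr q => simp [ExistsUnique, Gp_adj_inr_inr]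

end S5

/-- For `|R| = r`, the complete bipartite graph `K_{r^n, r^n}` admits an edge-decomposition
into copies of `BΓ(R; f₂,…,f_n)`: a family of subgraphs, each isomorphic to
`BΓ(R; f₂,…,f_n)`, whose edge sets partition the edge set of `K_{r^n, r^n}`. -/
theorem statement_5 (R : Type) [CommRing R] [Nontrivial R] [Fintype R] (n : ℕ) (hn : 2 ≤ n)
    (f : (i : ℕ) → (Fin i → R) → (Fin i → R) → R) :
    ∃ (ι : Type) (c : ι → SimpleGraph (Fin (Fintype.card R ^ n) ⊕ Fin (Fintype.card R ^ n))),
      (∀ i, c i ≤ completeBipartiteGraph (Fin (Fintype.card R ^ n)) (Fin (Fintype.card R ^ n))) ∧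
      (∀ i, Nonempty (c i ≃g BGamma R n f)) ∧
      (∀ e : Sym2 (Fin (Fintype.card R ^ n) ⊕ Fin (Fintype.card R ^ n)),
        e ∈ (completeBipartiteGraph (Fin (Fintype.card R ^ n))
              (Fin (Fintype.card R ^ n))).edgeSet ↔ ∃! i, e ∈ (c i).edgeSet) := by
  have hn0 : 0 < n := by omega
  have hcard : Fintype.card (Fin n → R) = Fintype.card R ^ n := by
    simp [Fintype.card_fun]
  let eqv : (Fin n → R) ≃ Fin (Fintype.card R ^ n) := Fintype.equivFinOfCardEq hcard
  let E : ((Fin n → R) ⊕ (Fin n → R)) ≃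
      (Fin (Fintype.card R ^ n) ⊕ Fin (Fintype.card R ^ n)) := Equiv.sumCongr eqv eqv
  have hL : ∀ x, E.symm (Sum.inl x) = Sum.inl (eqv.symm x) := fun _ => rfl
  have hR : ∀ x, E.symm (Sum.inr x) = Sum.inr (eqv.symm x) := fun _ => rfl
  refine ⟨{a : Fin n → R // a ⟨0, hn0⟩ = 0},
    fun a => (S5.Gp n f a.1).map E.toEmbedding, ?_, ?_, ?_⟩
  · intro a u v h
    rw [S5.map_equiv_adj] at h
    cases u with
    | inl x =>
      cases v with
      | inl y =>
        rw [hL, hL] at h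
        exact absurd h (S5.Gp_adj_inl_inl f a.1 _ _)
      | inr y => simp
    | inr x =>
      cases v with
      | inl y => simp
      | inr y =>
        rw [hR, hR] at h
        exact absurd h (S5.Gp_adj_inr_inr f a.1 _ _)
  · intro a
    exact ⟨((SimpleGraph.Iso.map (S5.shiftE a.1) (BGamma R n f)).trans
      (SimpleGraph.Iso.map E (S5.Gp n f a.1))).symm⟩
  · intro e
    refine Sym2.ind (fun u v => ?_) e
    simp only [SimpleGraph.mem_edgeSet]
    have hcb : (completeBipartiteGraph (Fin (Fintype.card R ^ n))
          (Fin (Fintype.card R ^ n))).Adj u v ↔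
        (completeBipartiteGraph (Fin n → R) (Fin n → R)).Adj (E.symm u) (E.symm v) := by
      cases u <;> cases v <;> simp [hL, hR]
    rw [hcb, S5.keyV hn0 f]
    exact existsUnique_congr fun a => (S5.map_equiv_adj _ E u v).symm
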